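/- In ×_m P_n with n ≥ 5, the leverage centrality of every vertex v satisfies -1/(2m+1) ≤ l(v) ≤ 1/(8m-2); in particular, as m → ∞ the leverage centrality of every vertex tends to 0. -/

import Mathlib

open SimpleGraph Finset

/-- Degree of a vertex (classical decidability so arbitrary graphs work). -/
noncomputable def deg {V : Type*} [Fintype V] (G : SimpleGraph V) (v : V) : ℕ :=
  letI : DecidableRel G.Adj := Classical.decRel _
  G.degree v

/-- Neighbor finset of a vertex. -/
noncomputable def nbrs {V : Type*} [Fintype V] (G : SimpleGraph V) (v : V) : Finset V :=
  letI : DecidableRel G.Adj := Classical.decRel _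
  G.neighborFinset v

/-- Leverage centrality of a vertex. -/
noncomputable def lev {V : Type*} [Fintype V] (G : SimpleGraph V) (v : V) : ℚ :=
  (1 / (deg G v : ℚ)) *
    ∑ u ∈ nbrs G v, ((deg G v : ℚ) - (deg G u : ℚ)) / ((deg G v : ℚ) + (deg G u : ℚ))

/-- The lattice `×_m P_n`: Cartesian product of `m` paths on `n` vertices.
Vertices are `m`-tuples of coordinates in `Fin n`; two vertices are adjacent
iff they differ in exactly one coordinate, by exactly 1. -/
def lattice (m n : ℕ) : SimpleGraph (Fin m → Fin n) where
  Adj v w := ∃ i, ((v i : ℕ) + 1 = (w i : ℕ) ∨ (w i : ℕ) + 1 = (v i : ℕ)) ∧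
    ∀ j, j ≠ i → v j = w j
  symm := by
    constructor
    rintro v w ⟨i, h, hj⟩
    exact ⟨i, h.symm, fun j hne => (hj j hne).symm⟩
  loopless := by
    constructor
    rintro v ⟨i, h, -⟩
    omega


lemma deg_eq_card {V : Type*} [Fintype V] (G : SimpleGraph V) (v : V) :
    deg G v = (nbrs G v).card := rfl

lemma mem_nbrs {V : Type*} [Fintype V] (G : SimpleGraph V) (v u : V) :
    u ∈ nbrs G v ↔ G.Adj v u := by
  letI : DecidableRel G.Adj := Classical.decRel _
  exact SimpleGraph.mem_neighborFinset G v u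

def adjVals (n : ℕ) (a : Fin n) : Finset (Fin n) :=
  univ.filter (fun x => (a : ℕ) + 1 = (x : ℕ) ∨ (x : ℕ) + 1 = (a : ℕ))

lemma mem_adjVals {n : ℕ} {a x : Fin n} :
    x ∈ adjVals n a ↔ ((a : ℕ) + 1 = (x : ℕ) ∨ (x : ℕ) + 1 = (a : ℕ)) := by
  simp [adjVals]

lemma ne_of_mem_adjVals {n : ℕ} {a x : Fin n} (h : x ∈ adjVals n a) : (x : ℕ) ≠ (a : ℕ) := by
  rw [mem_adjVals] at h; omega

lemma sum_nbrs {M : Type*} [AddCommMonoid M] {m n : ℕ} (v : Fin m → Fin n)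
    (g : (Fin m → Fin n) → M) :
    ∑ u ∈ nbrs (lattice m n) v, g u =
      ∑ p ∈ (univ : Finset (Fin m)).sigma (fun i => adjVals n (v i)),
        g (Function.update v p.1 p.2) := by
  refine (Finset.sum_bij (fun p _ => Function.update v p.1 p.2) ?_ ?_ ?_ ?_).symm
  · rintro ⟨i, x⟩ hp
    rw [Finset.mem_sigma] at hp
    rw [mem_nbrs]
    refine ⟨i, ?_, fun j hj => (Function.update_of_ne hj x v).symm⟩
    simpa using (mem_adjVals.mp hp.2)
  · rintro ⟨i, x⟩ hp ⟨j, y⟩ hq heq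
    rw [Finset.mem_sigma] at hp hq
    have hx := ne_of_mem_adjVals hp.2
    have hy := ne_of_mem_adjVals hq.2
    simp only at heq
    have hij : i = j := by
      by_contra hne
      have h1 := congrFun heq i
      rw [Function.update_self, Function.update_of_ne hne] at h1
      exact hx (by simpa using congrArg Fin.val h1)
    subst hij
    have h1 := congrFun heq i
    rw [Function.update_self, Function.update_self] at h1
    simp [h1]
  · intro u hu
    rw [mem_nbrs] at hu
    obtain ⟨i, hcond, hj⟩ := hu
    refine ⟨⟨i, u i⟩, ?_, ?_⟩
    · rw [Finset.mem_sigma]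
      exact ⟨mem_univ i, mem_adjVals.mpr hcond⟩
    · simp only []
      funext j
      by_cases h : j = i
      · subst h; rw [Function.update_self]
      · rw [Function.update_of_ne h]
        exact hj j h
  · intro p hp; rfl

def d0 (n : ℕ) (a : Fin n) : ℕ :=
  (if 0 < (a : ℕ) then 1 else 0) + (if (a : ℕ) + 1 < n then 1 else 0)

lemma adjVals_eq_both {n : ℕ} {a : Fin n} (h1 : 0 < (a : ℕ)) (h2 : (a : ℕ) + 1 < n) :
    adjVals n a = {⟨(a : ℕ) - 1, by omega⟩, ⟨(a : ℕ) + 1, h2⟩} := by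
  ext x
  rw [mem_adjVals, Finset.mem_insert, Finset.mem_singleton, Fin.ext_iff, Fin.ext_iff]
  simp only []
  omega

lemma adjVals_eq_lo {n : ℕ} {a : Fin n} (h1 : ¬ 0 < (a : ℕ)) (h2 : (a : ℕ) + 1 < n) :
    adjVals n a = {⟨(a : ℕ) + 1, h2⟩} := by
  ext x
  rw [mem_adjVals, Finset.mem_singleton, Fin.ext_iff]
  simp only []
  omega

lemma adjVals_eq_hi {n : ℕ} {a : Fin n} (h1 : 0 < (a : ℕ)) (h2 : ¬ (a : ℕ) + 1 < n) :
    adjVals n a = {⟨(a : ℕ) - 1, by omega⟩} := by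
  ext x
  rw [mem_adjVals, Finset.mem_singleton, Fin.ext_iff]
  simp only []
  have := x.isLt
  omega

lemma card_adjVals {n : ℕ} (hn : 2 ≤ n) (a : Fin n) : (adjVals n a).card = d0 n a := by
  have ha := a.isLt
  by_cases h1 : 0 < (a : ℕ) <;> by_cases h2 : (a : ℕ) + 1 < n
  · rw [adjVals_eq_both h1 h2, d0, if_pos h1, if_pos h2]
    rw [Finset.card_insert_of_notMem (by rw [Finset.mem_singleton, Fin.ext_iff]; simp only []; omega),
      Finset.card_singleton]
  · rw [adjVals_eq_hi h1 h2, d0, if_pos h1, if_neg h2, Finset.card_singleton]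
  · rw [adjVals_eq_lo h1 h2, d0, if_neg h1, if_pos h2, Finset.card_singleton]
  · omega

lemma deg_lattice {m n : ℕ} (hn : 2 ≤ n) (v : Fin m → Fin n) :
    deg (lattice m n) v = ∑ i, d0 n (v i) := by
  rw [deg_eq_card, Finset.card_eq_sum_ones, sum_nbrs v (fun _ => 1), Finset.sum_sigma]
  exact Finset.sum_congr rfl fun i _ => by
    rw [← Finset.card_eq_sum_ones, card_adjVals hn]

lemma deg_update {m n : ℕ} (hn : 2 ≤ n) (v : Fin m → Fin n) (i : Fin m) (x : Fin n) :
    deg (lattice m n) (Function.update v i x) + d0 n (v i)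
      = deg (lattice m n) v + d0 n x := by
  rw [deg_lattice hn, deg_lattice hn]
  have h : (fun j => d0 n (Function.update v i x j))
      = Function.update (fun j => d0 n (v j)) i (d0 n x) := by
    funext j
    by_cases hji : j = i
    · subst hji; simp
    · simp [Function.update_of_ne hji]
  calc (∑ j, d0 n (Function.update v i x j)) + d0 n (v i)
      = (∑ j, Function.update (fun j => d0 n (v j)) i (d0 n x) j) + d0 n (v i) := by rw [h]
    _ = (d0 n x + ∑ j ∈ univ.erase i, d0 n (v j)) + d0 n (v i) := by
        rw [Finset.sum_update_of_mem (mem_univ i), Finset.sdiff_singleton_eq_erase]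
    _ = (∑ j, d0 n (v j)) + d0 n x := by
        rw [← Finset.add_sum_erase _ _ (mem_univ i)]; ring

lemma d0_eq {n : ℕ} (hn : 2 ≤ n) (a : Fin n) :
    d0 n a = if 0 < (a : ℕ) ∧ (a : ℕ) + 1 < n then 2 else 1 := by
  have ha := a.isLt
  unfold d0
  split_ifs <;> omega

lemma coord_bound {m n : ℕ} (hn : 5 ≤ n) (v : Fin m → Fin n) (i : Fin m)
    (hd : 1 ≤ deg (lattice m n) v) :
    (if 0 < (v i : ℕ) ∧ (v i : ℕ) + 1 < n then (0:ℚ)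
        else -(1/(2*(deg (lattice m n) v : ℚ)+1)))
      ≤ (∑ x ∈ adjVals n (v i),
          ((deg (lattice m n) v : ℚ) - (deg (lattice m n) (Function.update v i x) : ℚ)) /
            ((deg (lattice m n) v : ℚ) + (deg (lattice m n) (Function.update v i x) : ℚ)))
    ∧ (∑ x ∈ adjVals n (v i),
          ((deg (lattice m n) v : ℚ) - (deg (lattice m n) (Function.update v i x) : ℚ)) /
            ((deg (lattice m n) v : ℚ) + (deg (lattice m n) (Function.update v i x) : ℚ)))
      ≤ (if 0 < (v i : ℕ) ∧ (v i : ℕ) + 1 < n then 1/(2*(deg (lattice m n) v : ℚ)-1)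
        else -(1/(2*(deg (lattice m n) v : ℚ)+1))) := by
  have hn2 : 2 ≤ n := by omega
  set D : ℚ := (deg (lattice m n) v : ℚ) with hD
  have hD1 : (1:ℚ) ≤ D := by rw [hD]; exact_mod_cast hd
  have hu : ∀ x : Fin n, (deg (lattice m n) (Function.update v i x) : ℚ)
      = D - d0 n (v i) + d0 n x := by
    intro x
    have h := congrArg (Nat.cast : ℕ → ℚ) (deg_update hn2 v i x)
    push_cast at h
    linarith
  have ha := (v i).isLt
  by_cases hint : 0 < (v i : ℕ) ∧ (v i : ℕ) + 1 < n
  · -- interior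
    rw [if_pos hint, if_pos hint, adjVals_eq_both hint.1 hint.2]
    have hdvi : d0 n (v i) = 2 := by rw [d0_eq hn2, if_pos hint]
    set x₁ : Fin n := ⟨(v i : ℕ) - 1, by omega⟩ with hx1
    set x₂ : Fin n := ⟨(v i : ℕ) + 1, hint.2⟩ with hx2
    have hne : x₁ ≠ x₂ := by
      rw [Fin.ne_iff_vne]; simp only [hx1, hx2]; omega
    rw [Finset.sum_pair hne]
    have he1 : d0 n x₁ = 1 ∨ d0 n x₁ = 2 := by rw [d0_eq hn2]; split_ifs <;> simp
    have he2 : d0 n x₂ = 1 ∨ d0 n x₂ = 2 := by rw [d0_eq hn2]; split_ifs <;> simp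
    have he3 : 3 ≤ d0 n x₁ + d0 n x₂ := by
      rw [d0_eq hn2, d0_eq hn2]
      simp only [hx1, hx2]
      split_ifs <;> omega
    have hpos : (0:ℚ) < 2*D - 1 := by linarith
    have hpos2 : (0:ℚ) < 2*D := by linarith
    have t0 : ∀ x : Fin n, d0 n x = 2 →
        (D - (deg (lattice m n) (Function.update v i x) : ℚ)) /
          (D + (deg (lattice m n) (Function.update v i x) : ℚ)) = 0 := by
      intro x hx
      rw [hu x, hdvi, hx]
      rw [show D - (D - (2:ℕ) + (2:ℕ)) = 0 by push_cast; ring]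
      simp
    have t1 : ∀ x : Fin n, d0 n x = 1 →
        (D - (deg (lattice m n) (Function.update v i x) : ℚ)) /
          (D + (deg (lattice m n) (Function.update v i x) : ℚ)) = 1/(2*D-1) := by
      intro x hx
      rw [hu x, hdvi, hx]
      rw [show D - (D - (2:ℕ) + (1:ℕ)) = 1 by push_cast; ring,
        show D + (D - (2:ℕ) + (1:ℕ)) = 2*D - 1 by push_cast; ring]
    rcases he1 with h1 | h1 <;> rcases he2 with h2 | h2
    · omega
    · rw [t1 x₁ h1, t0 x₂ h2]
      constructor <;> [positivity; linarith]
    · rw [t0 x₁ h1, t1 x₂ h2]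
      constructor <;> [positivity; linarith]
    · rw [t0 x₁ h1, t0 x₂ h2]
      exact ⟨by norm_num, by rw [add_zero]; positivity⟩
  · -- boundary
    rw [if_neg hint, if_neg hint]
    have hdvi : d0 n (v i) = 1 := by rw [d0_eq hn2, if_neg hint]
    have key : ∀ x : Fin n, d0 n x = 2 →
        (D - (deg (lattice m n) (Function.update v i x) : ℚ)) /
          (D + (deg (lattice m n) (Function.update v i x) : ℚ)) = -(1/(2*D+1)) := by
      intro x hx
      have hpos : (0:ℚ) < 2*D + 1 := by linarith
      rw [hu x, hdvi, hx]
      rw [show D - (D - (1:ℕ) + (2:ℕ)) = -1 by push_cast; ring,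
        show D + (D - (1:ℕ) + (2:ℕ)) = 2*D + 1 by push_cast; ring]
      rw [neg_div]
    by_cases h0 : 0 < (v i : ℕ)
    · -- v i = n - 1
      have h2 : ¬ (v i : ℕ) + 1 < n := by tauto
      rw [adjVals_eq_hi h0 h2, Finset.sum_singleton]
      have : d0 n (⟨(v i : ℕ) - 1, by omega⟩ : Fin n) = 2 := by
        rw [d0_eq hn2, if_pos]
        simp only []
        omega
      rw [key _ this]
      exact ⟨le_refl _, le_refl _⟩
    · -- v i = 0
      have h2 : (v i : ℕ) + 1 < n := by omega
      rw [adjVals_eq_lo h0 h2, Finset.sum_singleton]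
      have : d0 n (⟨(v i : ℕ) + 1, h2⟩ : Fin n) = 2 := by
        rw [d0_eq hn2, if_pos]
        simp only []
        omega
      rw [key _ this]
      exact ⟨le_refl _, le_refl _⟩


set_option maxHeartbeats 1000000 in
theorem lattice_leverage_bounds_and_convergence (n : ℕ) (hn : 5 ≤ n) :
    (∀ m : ℕ, 1 ≤ m → ∀ v : Fin m → Fin n,
        -(1 / (2 * (m : ℚ) + 1)) ≤ lev (lattice m n) v ∧
          lev (lattice m n) v ≤ 1 / (8 * (m : ℚ) - 2)) ∧
      (∀ ε : ℚ, 0 < ε → ∃ M : ℕ, ∀ m : ℕ, M ≤ m →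
        ∀ v : Fin m → Fin n, |lev (lattice m n) v| < ε) := by
  have hn2 : 2 ≤ n := by omega
  have main : ∀ m : ℕ, 1 ≤ m → ∀ v : Fin m → Fin n,
      -(1 / (2 * (m : ℚ) + 1)) ≤ lev (lattice m n) v ∧
        lev (lattice m n) v ≤ 1 / (8 * (m : ℚ) - 2) := by
    intro m hm v
    classical
    set k : ℕ := (univ.filter (fun i => 0 < (v i : ℕ) ∧ (v i : ℕ) + 1 < n)).card with hk
    have hkm : k ≤ m := le_trans (Finset.card_filter_le _ _) (by simp)
    have hdk : deg (lattice m n) v = m + k := by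
      rw [deg_lattice hn2 v]
      calc ∑ i, d0 n (v i)
          = ∑ i : Fin m, (1 + if 0 < (v i : ℕ) ∧ (v i : ℕ) + 1 < n then 1 else 0) := by
            refine Finset.sum_congr rfl fun i _ => ?_
            rw [d0_eq hn2]
            split_ifs <;> rfl
        _ = m + k := by
            rw [Finset.sum_add_distrib, Finset.sum_const, Finset.card_univ,
              Fintype.card_fin, smul_eq_mul, mul_one, hk, Finset.card_filter]
    have hd1 : 1 ≤ deg (lattice m n) v := by omega
    set D : ℚ := (deg (lattice m n) v : ℚ) with hD
    have hDmk : D = (m : ℚ) + (k : ℚ) := by rw [hD, hdk]; push_cast; ring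
    have hM1 : (1:ℚ) ≤ (m : ℚ) := by exact_mod_cast hm
    have hK0 : (0:ℚ) ≤ (k : ℚ) := by positivity
    have hKM : (k : ℚ) ≤ (m : ℚ) := by exact_mod_cast hkm
    have hD1 : (1:ℚ) ≤ D := by rw [hDmk]; linarith
    have hDpos : (0:ℚ) < D := by linarith
    have hlev : lev (lattice m n) v
        = 1/D * ∑ i : Fin m, ∑ x ∈ adjVals n (v i),
            (D - (deg (lattice m n) (Function.update v i x) : ℚ)) /
              (D + (deg (lattice m n) (Function.update v i x) : ℚ)) := by
      rw [lev, sum_nbrs v (fun u => (D - (deg (lattice m n) u : ℚ)) /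
        (D + (deg (lattice m n) u : ℚ))), Finset.sum_sigma]
    have hbound := fun i : Fin m => coord_bound hn v i hd1
    have hsum : ∀ c1 c2 : ℚ,
        ∑ i : Fin m, (if 0 < (v i : ℕ) ∧ (v i : ℕ) + 1 < n then c1 else c2)
          = (k:ℚ) * c1 + ((m:ℚ) - (k:ℚ)) * c2 := by
      intro c1 c2
      rw [Finset.sum_ite, Finset.sum_const, Finset.sum_const]
      have hcard : (univ.filter (fun i => ¬(0 < (v i : ℕ) ∧ (v i : ℕ) + 1 < n))).card
          = m - k := by
        have h := Finset.card_filter_add_card_filter_not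
          (s := (univ : Finset (Fin m)))
          (p := fun i => 0 < (v i : ℕ) ∧ (v i : ℕ) + 1 < n)
        rw [Finset.card_univ, Fintype.card_fin] at h
        omega
      rw [hcard, ← hk, nsmul_eq_mul, nsmul_eq_mul, Nat.cast_sub hkm]
    have hlow : (k:ℚ) * 0 + ((m:ℚ) - (k:ℚ)) * (-(1/(2*D+1)))
        ≤ ∑ i : Fin m, ∑ x ∈ adjVals n (v i),
            (D - (deg (lattice m n) (Function.update v i x) : ℚ)) /
              (D + (deg (lattice m n) (Function.update v i x) : ℚ)) := by
      rw [← hsum]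
      exact Finset.sum_le_sum fun i _ => (hbound i).1
    have hup : (∑ i : Fin m, ∑ x ∈ adjVals n (v i),
            (D - (deg (lattice m n) (Function.update v i x) : ℚ)) /
              (D + (deg (lattice m n) (Function.update v i x) : ℚ)))
        ≤ (k:ℚ) * (1/(2*D-1)) + ((m:ℚ) - (k:ℚ)) * (-(1/(2*D+1))) := by
      rw [← hsum]
      exact Finset.sum_le_sum fun i _ => (hbound i).2
    have h2Dm : (0:ℚ) < 2*D - 1 := by linarith
    have h2Dp : (0:ℚ) < 2*D + 1 := by linarith
    constructor
    · -- lower bound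
      have step1 : -(1/(2*(m:ℚ)+1))
          ≤ 1/D * ((k:ℚ) * 0 + ((m:ℚ) - (k:ℚ)) * (-(1/(2*D+1)))) := by
        have heq : 1/D * ((k:ℚ) * 0 + ((m:ℚ) - (k:ℚ)) * (-(1/(2*D+1))))
            = -(((m:ℚ) - (k:ℚ)) / (D * (2*D+1))) := by
          have h1 : D ≠ 0 := ne_of_gt hDpos
          have h2 : 2*D + 1 ≠ 0 := ne_of_gt h2Dp
          field_simp
          ring
        rw [heq, neg_le_neg_iff, div_le_div_iff₀ (by positivity) (by linarith : (0:ℚ) < 2*(m:ℚ)+1)]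
        rw [hDmk]
        nlinarith [mul_nonneg hK0 hK0]
      calc -(1/(2*(m:ℚ)+1))
          ≤ 1/D * ((k:ℚ) * 0 + ((m:ℚ) - (k:ℚ)) * (-(1/(2*D+1)))) := step1
        _ ≤ 1/D * ∑ i : Fin m, ∑ x ∈ adjVals n (v i),
              (D - (deg (lattice m n) (Function.update v i x) : ℚ)) /
                (D + (deg (lattice m n) (Function.update v i x) : ℚ)) :=
            mul_le_mul_of_nonneg_left hlow (by positivity)
        _ = lev (lattice m n) v := hlev.symm
    · -- upper bound
      have step2 : 1/D * ((k:ℚ) * (1/(2*D-1)) + ((m:ℚ) - (k:ℚ)) * (-(1/(2*D+1))))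
          ≤ 1/(8*(m:ℚ)-2) := by
        have h1 : D ≠ 0 := ne_of_gt hDpos
        have h2 : 2*D - 1 ≠ 0 := ne_of_gt h2Dm
        have h3 : 2*D + 1 ≠ 0 := ne_of_gt h2Dp
        have heq : 1/D * ((k:ℚ) * (1/(2*D-1)) + ((m:ℚ) - (k:ℚ)) * (-(1/(2*D+1))))
            = ((k:ℚ) * (2*D+1) - ((m:ℚ) - (k:ℚ)) * (2*D-1)) / (D * ((2*D-1) * (2*D+1))) := by
          simp only [mul_one_div, mul_neg]
          rw [← sub_eq_add_neg, div_sub_div _ _ h2 h3, one_div_mul_eq_div, div_div]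
          ring
        rw [heq, div_le_div_iff₀ (by positivity) (by linarith : (0:ℚ) < 8*(m:ℚ)-2)]
        rw [hDmk]
        nlinarith [sq_nonneg ((m:ℚ)-(k:ℚ)), sq_nonneg ((m:ℚ)+(k:ℚ)),
          mul_nonneg hK0 (sub_nonneg.mpr hKM),
          mul_nonneg (mul_nonneg hK0 hK0) (sub_nonneg.mpr hKM),
          mul_nonneg (sub_nonneg.mpr hKM) (sub_nonneg.mpr hKM),
          sq_nonneg (k:ℚ), mul_nonneg hK0 hK0]
      calc lev (lattice m n) v
          = 1/D * ∑ i : Fin m, ∑ x ∈ adjVals n (v i),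
              (D - (deg (lattice m n) (Function.update v i x) : ℚ)) /
                (D + (deg (lattice m n) (Function.update v i x) : ℚ)) := hlev
        _ ≤ 1/D * ((k:ℚ) * (1/(2*D-1)) + ((m:ℚ) - (k:ℚ)) * (-(1/(2*D+1)))) :=
            mul_le_mul_of_nonneg_left hup (by positivity)
        _ ≤ 1/(8*(m:ℚ)-2) := step2
  refine ⟨main, ?_⟩
  intro ε hε
  refine ⟨Nat.ceil (1/ε) + 1, fun m hmM v => ?_⟩
  have hm1 : 1 ≤ m := le_trans (Nat.le_add_left 1 _) hmM
  obtain ⟨hl, hu⟩ := main m hm1 v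
  have hM1 : (1:ℚ) ≤ (m : ℚ) := by exact_mod_cast hm1
  have hceil : (1/ε : ℚ) ≤ ((Nat.ceil (1/ε) : ℕ) : ℚ) := Nat.le_ceil _
  have hmq : ((Nat.ceil (1/ε) : ℕ) : ℚ) + 1 ≤ (m : ℚ) := by exact_mod_cast hmM
  have h1 : 1/ε < (m : ℚ) := by linarith
  rw [abs_lt]
  constructor
  · have hkey : 1/(2*(m:ℚ)+1) < ε := by
      rw [div_lt_iff₀ (by linarith : (0:ℚ) < 2*(m:ℚ)+1)]
      have := (div_lt_iff₀ hε).mp h1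
      nlinarith
    linarith
  · have hkey : 1/(8*(m:ℚ)-2) < ε := by
      rw [div_lt_iff₀ (by linarith : (0:ℚ) < 8*(m:ℚ)-2)]
      have := (div_lt_iff₀ hε).mp h1
      nlinarith
    linarith
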